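/- (Proposition 1.5(iii).) Let (X, μ) be a probability space and T : X → X a measurable, measure-preserving map. Call T lightly mixing if for every pair of measurable sets A, B ⊆ X with μ(A) > 0 and μ(B) > 0 there exists N₀ such that μ(T^{-n}(A) ∩ B) > 0 for all n ≥ N₀. The following are equivalent: (a) T is lightly mixing; (b) every sequence (A_n)_{n≥1} of measurable sets taking only finitely many distinct values (some of which may have measure zero) and satisfying ∑_{n=1}^∞ μ(A_n) = ∞ is Borel–Cantelli, i.e. for μ-a.e. x ∈ X there are infinitely many n with T^n(x) ∈ A_n. -/

import Mathlib

open MeasureTheory Filter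

/-- **Proposition 1.5(iii).** For a measure-preserving map `T` of a probability
space, `T` is lightly mixing (for all sets `A, B` of positive measure,
`μ(T^{-n}A ∩ B) > 0` for all large `n`) if and only if every sequence of
measurable sets taking only finitely many distinct values (possibly of measure
zero) with divergent sum of measures is Borel–Cantelli. -/
theorem lightlyMixing_iff_finitelyManyValues_BC
    {X : Type*} [MeasurableSpace X] (μ : Measure X) [IsProbabilityMeasure μ]
    (T : X → X) (hT : Measurable T) (hTm : MeasurePreserving T μ μ) :
    (∀ A B : Set X, MeasurableSet A → MeasurableSet B → 0 < μ A → 0 < μ B →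
      ∃ N₀ : ℕ, ∀ n, N₀ ≤ n → 0 < μ (T^[n] ⁻¹' A ∩ B)) ↔
    (∀ A : ℕ → Set X, (∀ n, MeasurableSet (A n)) → (Set.range A).Finite →
      Tendsto (fun N : ℕ => ∑ n ∈ Finset.Icc 1 N, (μ (A n)).toReal) atTop atTop →
      ∀ᵐ x ∂μ, ∃ᶠ n in atTop, T^[n] x ∈ A n) := by
  classical
  constructor
  · -- lightly mixing ⇒ BC for finitely-valued sequences
    intro hmix A hAmeas hfin hsum
    -- the set of indices with positive measure is infinite
    have hTinf : {n | 0 < μ (A n)}.Infinite := by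
      intro hfinT
      set F := hfinT.toFinset with hF
      have hbound : ∀ N : ℕ, ∑ n ∈ Finset.Icc 1 N, (μ (A n)).toReal
          ≤ ∑ n ∈ F, (μ (A n)).toReal := by
        intro N
        have h1 : ∑ n ∈ Finset.Icc 1 N, (μ (A n)).toReal
            = ∑ n ∈ Finset.Icc 1 N ∩ F, (μ (A n)).toReal := by
          refine (Finset.sum_subset (Finset.inter_subset_left) ?_).symm
          intro x hx hx'
          have : ¬ 0 < μ (A x) := by
            intro hpos
            exact hx' (Finset.mem_inter.mpr ⟨hx, hfinT.mem_toFinset.mpr hpos⟩)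
          have : μ (A x) = 0 := by
            simpa [pos_iff_ne_zero] using this
          simp [this]
        rw [h1]
        exact Finset.sum_le_sum_of_subset_of_nonneg Finset.inter_subset_right
          (fun i _ _ => ENNReal.toReal_nonneg)
      obtain ⟨N, hN⟩ := (tendsto_atTop.mp hsum (∑ n ∈ F, (μ (A n)).toReal + 1)).exists
      have := hbound N
      linarith
    -- pigeonhole: some value of positive measure recurs infinitely often
    obtain ⟨A₀, hA₀pos, hSinf⟩ : ∃ A₀ : Set X, 0 < μ A₀ ∧ {n | A n = A₀}.Infinite := by
      by_contra h
      push_neg at h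
      have hsub : {n | 0 < μ (A n)} ⊆
          ⋃ v ∈ {v | v ∈ Set.range A ∧ 0 < μ v}, {n | A n = v} := by
        intro n hn
        exact Set.mem_biUnion ⟨⟨n, rfl⟩, hn⟩ rfl
      have hfin' : (⋃ v ∈ {v | v ∈ Set.range A ∧ 0 < μ v}, {n | A n = v}).Finite := by
        refine Set.Finite.biUnion (hfin.subset (fun v hv => hv.1)) ?_
        intro v hv
        by_contra hinf
        exact hinf (h v hv.2)
      exact hTinf (hfin'.subset hsub)
    set S := {n | A n = A₀} with hS
    obtain ⟨m, hm⟩ := hSinf.nonempty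
    have hA₀meas : MeasurableSet A₀ := hm ▸ hAmeas m
    -- the exceptional sets
    set E : ℕ → Set X := fun N => ⋂ (n) (_ : n ∈ S ∧ N ≤ n), (T^[n] ⁻¹' A₀)ᶜ with hE
    have hEmeas : ∀ N, MeasurableSet (E N) := by
      intro N
      exact MeasurableSet.iInter fun n => MeasurableSet.iInter fun _ =>
        ((hT.iterate n) hA₀meas).compl
    have hEnull : ∀ N, μ (E N) = 0 := by
      intro N
      by_contra hpos
      have hpos : 0 < μ (E N) := pos_iff_ne_zero.mpr hpos
      obtain ⟨N₀, hN₀⟩ := hmix A₀ (E N) hA₀meas (hEmeas N) hA₀pos hpos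
      obtain ⟨n, hnS, hn⟩ := hSinf.exists_gt (max N N₀)
      have h1 : μ (T^[n] ⁻¹' A₀ ∩ E N) > 0 :=
        hN₀ n (le_of_lt (lt_of_le_of_lt (le_max_right N N₀) hn))
      have h2 : T^[n] ⁻¹' A₀ ∩ E N = ∅ := by
        ext x
        simp only [Set.mem_inter_iff, Set.mem_empty_iff_false, iff_false, not_and]
        intro hx hxE
        have := Set.mem_iInter₂.mp hxE n ⟨hnS, le_of_lt (lt_of_le_of_lt (le_max_left N N₀) hn)⟩
        exact this hx
      rw [h2] at h1
      simp at h1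
    have hUnull : μ (⋃ N, E N) = 0 := measure_iUnion_null hEnull
    have hae := measure_eq_zero_iff_ae_notMem.mp hUnull
    filter_upwards [hae] with x hx
    rw [frequently_atTop]
    intro N
    have hxE : x ∉ E N := fun h => hx (Set.mem_iUnion.mpr ⟨N, h⟩)
    simp only [hE, Set.mem_iInter, Set.mem_compl_iff, not_forall] at hxE
    obtain ⟨n, ⟨hnS, hNn⟩, hxn⟩ := hxE
    refine ⟨n, hNn, ?_⟩
    have hxA : T^[n] x ∈ A₀ := not_not.mp hxn
    have hnA : A n = A₀ := hnS
    rw [hnA]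
    exact hxA
  · -- BC ⇒ lightly mixing
    intro hBC A B hA hB hApos hBpos
    by_contra h
    push_neg at h
    set S := {n | μ (T^[n] ⁻¹' A ∩ B) = 0} with hS
    have hSin : ∀ N₀ : ℕ, ∃ n ∈ S, N₀ ≤ n := by
      intro N₀
      obtain ⟨n, hn1, hn2⟩ := h N₀
      exact ⟨n, by simpa [hS, pos_iff_ne_zero] using hn2, hn1⟩
    have hSinf : S.Infinite := by
      refine Set.infinite_of_not_bddAbove ?_
      rintro ⟨b, hb⟩
      obtain ⟨n, hnS, hn⟩ := hSin (b + 1)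
      exact absurd (hb hnS) (by omega)
    set A' : ℕ → Set X := fun n => if n ∈ S then A else ∅ with hA'
    have hA'meas : ∀ n, MeasurableSet (A' n) := by
      intro n
      by_cases hn : n ∈ S <;> simp [hA', hn, hA]
    have hA'fin : (Set.range A').Finite := by
      refine Set.Finite.subset ((Set.finite_singleton A).insert ∅) ?_
      rintro _ ⟨n, rfl⟩
      by_cases hn : n ∈ S <;> simp [hA', hn]
    have hμA : μ A ≠ ⊤ := measure_ne_top μ A
    have hc : 0 < (μ A).toReal := ENNReal.toReal_pos (pos_iff_ne_zero.mp hApos) hμA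
    have hA'sum : Tendsto (fun N : ℕ => ∑ n ∈ Finset.Icc 1 N, (μ (A' n)).toReal)
        atTop atTop := by
      refine tendsto_atTop_atTop_of_monotone ?_ ?_
      · intro N M hNM
        refine Finset.sum_le_sum_of_subset_of_nonneg
          (Finset.Icc_subset_Icc_right hNM) (fun i _ _ => ENNReal.toReal_nonneg)
      · intro b
        obtain ⟨k, hk⟩ := exists_nat_ge (b / (μ A).toReal)
        have hbk : b ≤ k * (μ A).toReal := by
          rw [div_le_iff₀ hc] at hk
          exact hk
        obtain ⟨F, hFsub, hFcard⟩ :=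
          (hSinf.diff (Set.finite_singleton 0)).exists_subset_card_eq k
        refine ⟨F.sup id, ?_⟩
        have hFsub' : F ⊆ Finset.Icc 1 (F.sup id) := by
          intro n hn
          have hn' := hFsub hn
          have h0 : n ≠ 0 := fun h0 => hn'.2 (by simp [h0])
          exact Finset.mem_Icc.mpr ⟨Nat.one_le_iff_ne_zero.mpr h0, Finset.le_sup (f := id) hn⟩
        calc b ≤ k * (μ A).toReal := hbk
          _ = ∑ n ∈ F, (μ (A' n)).toReal := by
              rw [Finset.sum_congr rfl (fun n hn => ?_), Finset.sum_const, hFcard,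
                nsmul_eq_mul]
              have : n ∈ S := (hFsub hn).1
              simp [hA', this]
          _ ≤ ∑ n ∈ Finset.Icc 1 (F.sup id), (μ (A' n)).toReal :=
              Finset.sum_le_sum_of_subset_of_nonneg hFsub'
                (fun i _ _ => ENNReal.toReal_nonneg)
    have hae := hBC A' hA'meas hA'fin hA'sum
    set Bad : Set X := ⋃ n ∈ S, (T^[n] ⁻¹' A ∩ B) with hBad
    have hBadnull : μ Bad = 0 := by
      refine (measure_biUnion_null_iff (Set.to_countable S)).mpr ?_
      intro n hn
      exact hn
    have hsub : B \ Bad ⊆ {x | ¬ ∃ᶠ n in atTop, T^[n] x ∈ A' n} := by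
      rintro x ⟨hxB, hxBad⟩ hfreq
      obtain ⟨n, hn⟩ := hfreq.exists
      by_cases hnS : n ∈ S
      · have hn' : T^[n] x ∈ A := by simpa [hA', hnS] using hn
        exact hxBad (Set.mem_biUnion hnS ⟨hn', hxB⟩)
      · simp [hA', hnS] at hn
    have h0 : μ (B \ Bad) = 0 :=
      measure_mono_null hsub (ae_iff.mp hae)
    rw [measure_diff_null hBadnull] at h0
    exact absurd h0 (pos_iff_ne_zero.mp hBpos)
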